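/- arXiv:1405.5299 — 5 statements merged into one kernel-verified Lean document; each statement's English description precedes it below -/
import Mathlib

section
/- In a triangulated category, if in a distinguished triangle X → Y → Z → ΣX the identity of X is annihilated by r (i.e., r·id_X = 0) and the identity of Z is annihilated by s (i.e., s·id_Z = 0), where r, s are elements of a commutative ring R acting centrally on the category, then (rs)·id_Y = 0. -/
open CategoryTheory Limits Pretriangulated

universe v u

variable (C : Type u) [Category.{v} C] [Preadditive C] [HasZeroObject C]
  [HasShift C ℤ] [∀ n : ℤ, (shiftFunctor C n).Additive] [Pretriangulated C]

/-- `starOp C S T` is the class of objects `E` fitting into a distinguished triangle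
`A ⟶ E ⟶ B ⟶ A⟦1⟧` with `A ∈ S` and `B ∈ T`. -/
def starOp (S T : Set C) : Set C :=
  {E | ∃ (A B : C) (f : A ⟶ E) (g : E ⟶ B) (h : B ⟶ A⟦(1 : ℤ)⟧),
    A ∈ S ∧ B ∈ T ∧ Triangle.mk f g h ∈ distTriang C}

/-- in an `R`-linear triangulated category, in a distinguished triangle
`X ⟶ Y ⟶ Z ⟶ X⟦1⟧`, if `r • 𝟙 X = 0` and `s • 𝟙 Z = 0` then `(r * s) • 𝟙 Y = 0`. -/
theorem kill_of_triangle (R : Type*) [CommRing R] [Linear R C]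
    [∀ n : ℤ, Functor.Linear R (shiftFunctor C n)]
    (r s : R) (X Y Z : C) (f : X ⟶ Y) (g : Y ⟶ Z) (h : Z ⟶ X⟦(1 : ℤ)⟧)
    (hdist : Triangle.mk f g h ∈ distTriang C)
    (hX : r • (𝟙 X) = 0) (hZ : s • (𝟙 Z) = 0) :
    (r * s) • (𝟙 Y) = 0 := by
  obtain ⟨t, ht⟩ := Triangle.coyoneda_exact₂ _ hdist (s • 𝟙 Y) (by
    show (s • 𝟙 Y) ≫ g = 0
    rw [Linear.smul_comp, Category.id_comp, ← Category.comp_id g,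
      ← Linear.comp_smul, hZ, comp_zero])
  have : (r * s) • (𝟙 Y) = r • (s • 𝟙 Y) := by rw [mul_smul]
  rw [this, ht]
  clear ht
  revert t
  rintro (t : Y ⟶ X)
  show r • (t ≫ f) = 0
  rw [← Linear.comp_smul, ← Category.id_comp f, ← Linear.smul_comp, hX,
    zero_comp, comp_zero]
end

section
/- Ghost Lemma: Let T be a triangulated category with a full subcategory P of 'projective generators', and call a morphism f : X → Y a ghost if Hom(Σⁿ P, f) = 0 for all P ∈ P and all integers n. If g : X → Y is an n-fold composition of ghosts and Q is an object built from P by n-fold extensions (i.e., Q ∈ P^{*n} := P * P * ... * P, closed under shifts, finite direct sums and retracts at each step), then Hom(Q, g) = 0. -/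
open CategoryTheory Limits Pretriangulated

universe v u

variable (C : Type u) [Category.{v} C] [Preadditive C] [HasZeroObject C]
  [HasShift C ℤ] [∀ n : ℤ, (shiftFunctor C n).Additive] [Pretriangulated C]

variable [HasBinaryBiproducts C]

/-- Closure of a class of objects under finite direct sums, retracts and shifts. -/
inductive AddClosure (S : Set C) : C → Prop
  | of (X : C) : X ∈ S → AddClosure S X
  | zero (X : C) : IsZero X → AddClosure S X
  | shift (X : C) (k : ℤ) : AddClosure S X → AddClosure S (X⟦k⟧)
  | sum (X Y : C) : AddClosure S X → AddClosure S Y → AddClosure S (X ⊞ Y)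
  | retract (X Y : C) (i : X ⟶ Y) (p : Y ⟶ X) :
      i ≫ p = 𝟙 X → AddClosure S Y → AddClosure S X

/-- `pow C S n` is the `n`-fold diamond `S ⋄ ⋯ ⋄ S`, where `S ⋄ T = add (S * T)`. -/
def pow (S : Set C) : ℕ → Set C
  | 0 => {X | IsZero X}
  | n + 1 => {X | AddClosure C (starOp C S (pow S n)) X}

/-- A morphism `f` is a `P`-ghost if every composite `Q⟦k⟧ ⟶ X ⟶ Y` with `Q ∈ P` vanishes. -/
def IsGhost (P : Set C) {X Y : C} (f : X ⟶ Y) : Prop :=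
  ∀ Q ∈ P, ∀ (k : ℤ) (g : Q⟦k⟧ ⟶ X), g ≫ f = 0

/-- `GhostPow C P n f` : `f` is an `n`-fold composite of `P`-ghosts. -/
inductive GhostPow (P : Set C) : ℕ → ∀ {X Y : C}, (X ⟶ Y) → Prop
  | zero {X Y : C} (f : X ⟶ Y) : GhostPow P 0 f
  | comp {n : ℕ} {X Y Z : C} (f : X ⟶ Y) (g : Y ⟶ Z) :
      IsGhost C P f → GhostPow P n g → GhostPow P (n + 1) (f ≫ g)

/-- The objects whose identity is annihilated by the scalar `r`. -/
def Tkill (R : Type*) [CommRing R] [Linear R C] (r : R) : Set C := {X | r • (𝟙 X) = 0}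


lemma ghost_lemma_aux (P : Set C) :
    ∀ (n : ℕ) {X Y : C} (g : X ⟶ Y), GhostPow C P n g →
      ∀ (Q : C), Q ∈ pow C P n → ∀ (k : ℤ) (h : Q⟦k⟧ ⟶ X), h ≫ g = 0 := by
  intro n
  induction n with
  | zero =>
    intro X Y g _ Q hQ k h
    have hz : IsZero (Q⟦k⟧) := (shiftFunctor C k).map_isZero hQ
    rw [hz.eq_of_src h 0, zero_comp]
  | succ n ih =>
    intro X Y g hg Q hQ
    cases hg with
    | comp f g' hf hg' =>
    have hQ' : AddClosure C (starOp C P (pow C P n)) Q := hQ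
    clear hQ
    induction hQ' with
    | of Q hQmem =>
      intro k h
      obtain ⟨A, B, a, b, c, hA, hB, hT⟩ := hQmem
      have hT' : (Triangle.shiftFunctor C k).obj (Triangle.mk a b c) ∈ distTriang C :=
        Triangle.shift_distinguished _ hT k
      have hzero : ((Triangle.shiftFunctor C k).obj (Triangle.mk a b c)).mor₁ ≫ (h ≫ f) = 0 := by
        change (k.negOnePow • a⟦k⟧') ≫ (h ≫ f) = 0
        rw [Linear.units_smul_comp, ← Category.assoc]
        rw [hf A hA k (a⟦k⟧' ≫ h), smul_zero]
      obtain ⟨φ, hφ⟩ := Triangle.yoneda_exact₂ _ hT' (h ≫ f) hzero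
      have hφg : φ ≫ g' = 0 := ih g' hg' B hB k φ
      rw [← Category.assoc, show h ≫ f = _ from hφ]
      exact (Category.assoc _ _ _).trans ((congrArg _ hφg).trans comp_zero)
    | zero Q hQz =>
      intro k h
      have hz : IsZero (Q⟦k⟧) := (shiftFunctor C k).map_isZero hQz
      rw [hz.eq_of_src h 0, zero_comp]
    | shift Q k' _ ihQ =>
      intro k h
      have h2 := ihQ (k' + k) ((shiftFunctorAdd C k' k).hom.app Q ≫ h)
      rw [Category.assoc] at h2
      exact zero_of_epi_comp ((shiftFunctorAdd C k' k).hom.app Q) h2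
    | sum Q₁ Q₂ _ _ ih₁ ih₂ =>
      intro k h
      have h1 := ih₁ k ((shiftFunctor C k).map biprod.inl ≫ h)
      have h2 := ih₂ k ((shiftFunctor C k).map biprod.inr ≫ h)
      have key : h ≫ f ≫ g' =
          (shiftFunctor C k).map biprod.fst ≫
            (((shiftFunctor C k).map biprod.inl ≫ h) ≫ (f ≫ g')) +
          (shiftFunctor C k).map biprod.snd ≫
            (((shiftFunctor C k).map biprod.inr ≫ h) ≫ (f ≫ g')) := by
        conv_lhs => rw [← Category.id_comp h, ← CategoryTheory.Functor.map_id,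
          ← biprod.total, Functor.map_add, Functor.map_comp, Functor.map_comp]
        simp [Preadditive.add_comp, Category.assoc]
      rw [key, h1, h2, comp_zero, comp_zero, add_zero]
    | retract Q₁ Q₂ i p hip _ ihQ =>
      intro k h
      have h2 := ihQ k (p⟦k⟧' ≫ h)
      have key : h = i⟦k⟧' ≫ p⟦k⟧' ≫ h := by
        rw [← Category.assoc, ← Functor.map_comp, hip, CategoryTheory.Functor.map_id,
          Category.id_comp]
      rw [key, Category.assoc, h2, comp_zero]

/-- Ghost Lemma: if `g` is an `n`-fold composite of `P`-ghosts and `Q` lies in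
the `n`-fold diamond `P ⋄ ⋯ ⋄ P`, then every composite `Q ⟶ X ⟶ Y` through `g` vanishes. -/
theorem ghost_lemma (P : Set C) (hP : ∀ Q ∈ P, ∀ k : ℤ, Q⟦k⟧ ∈ P)
    (n : ℕ) {X Y : C} (g : X ⟶ Y) (hg : GhostPow C P n g)
    (Q : C) (hQ : Q ∈ pow C P n) (h : Q ⟶ X) :
    h ≫ g = 0 := by
  have h2 := ghost_lemma_aux C P n g hg Q hQ 0
      (((shiftFunctorZero C ℤ).hom.app Q) ≫ h)
  rw [Category.assoc] at h2
  exact zero_of_epi_comp _ h2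
end

section
/- Let A be an R-linear abelian category with enough projectives, T = D^b(A), r ∈ R, n ≥ 0. If T = P_n ⋄ T_r (every bounded complex is, up to retracts, an extension of an object of T_r by an object built from n-fold extensions of projectives), then r annihilates every n-fold composite of ghost morphisms in T. -/
open CategoryTheory Limits Pretriangulated

universe v u

variable (C : Type u) [Category.{v} C] [Preadditive C] [HasZeroObject C]
  [HasShift C ℤ] [∀ n : ℤ, (shiftFunctor C n).Additive] [Pretriangulated C]

variable [HasBinaryBiproducts C]

section Derived

variable (A : Type u) [Category.{v} A] [Abelian A] [HasDerivedCategory A]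

/-- Objects of the derived category with bounded cohomology (i.e. objects of `D^b(A)`). -/
def Bdd (X : DerivedCategory A) : Prop :=
  ∃ a b : ℤ, ∀ i : ℤ, (i < a ∨ b < i) → IsZero ((DerivedCategory.homologyFunctor A i).obj X)

/-- The projective objects of `A`, viewed in the derived category. -/
def ProjCls : Set (DerivedCategory A) :=
  {X | ∃ P : A, Projective P ∧ Nonempty (X ≅ (DerivedCategory.singleFunctor A 0).obj P)}

end Derived


section Aux

variable {C}
variable {P : Set C}

lemma GhostPow.precomp {n : ℕ} {X Y Z : C} (g : X ⟶ Y) {f : Y ⟶ Z}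
    (hf : GhostPow C P n f) : GhostPow C P n (g ≫ f) := by
  cases hf with
  | zero f => exact GhostPow.zero _
  | comp f₁ f₂ h₁ h₂ =>
      rw [← Category.assoc]
      refine GhostPow.comp _ _ (fun Q hQ k a => ?_) h₂
      rw [← Category.assoc]
      exact h₁ Q hQ k _

lemma IsGhost.shift {X Y : C} {f : X ⟶ Y} (hf : IsGhost C P f) (k : ℤ) :
    IsGhost C P (f⟦k⟧') := by
  intro Q hQ j g
  apply (shiftFunctor C (-k)).map_injective
  rw [Functor.map_comp, Functor.map_zero, shift_shift_neg' f k]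
  have key : g⟦-k⟧' ≫ (shiftFunctorCompIsoId C k (-k) (add_neg_cancel k)).hom.app X ≫ f = 0 := by
    have h0 := hf Q hQ (j + -k) ((shiftFunctorAdd' C j (-k) (j + -k) rfl).hom.app Q ≫
      g⟦-k⟧' ≫ (shiftFunctorCompIsoId C k (-k) (add_neg_cancel k)).hom.app X)
    have h1 := congrArg (fun t => (shiftFunctorAdd' C j (-k) (j + -k) rfl).inv.app Q ≫ t) h0
    simpa using h1
  rw [show g⟦-k⟧' ≫ (shiftFunctorCompIsoId C k (-k) (add_neg_cancel k)).hom.app X ≫ f ≫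
      (shiftFunctorCompIsoId C k (-k) (add_neg_cancel k)).inv.app Y =
      (g⟦-k⟧' ≫ (shiftFunctorCompIsoId C k (-k) (add_neg_cancel k)).hom.app X ≫ f) ≫
      (shiftFunctorCompIsoId C k (-k) (add_neg_cancel k)).inv.app Y by simp, key, zero_comp]

lemma GhostPow.shift {n : ℕ} {X Y : C} {f : X ⟶ Y} (hf : GhostPow C P n f) (k : ℤ) :
    GhostPow C P n (f⟦k⟧') := by
  induction hf with
  | zero f => exact GhostPow.zero _
  | comp f₁ f₂ h₁ h₂ ih =>
      rw [Functor.map_comp]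
      exact GhostPow.comp _ _ (h₁.shift k) ih

lemma pow_ghost_vanish : ∀ (n : ℕ) (A : C), A ∈ pow C P n →
    ∀ (X Z : C) (f : X ⟶ Z), GhostPow C P n f → ∀ a : A ⟶ X, a ≫ f = 0 := by
  intro n
  induction n with
  | zero =>
      intro A hA X Z f hf a
      have hA' : IsZero A := hA
      rw [hA'.eq_zero_of_src a, zero_comp]
  | succ n ih =>
      intro A hA
      have hA' : AddClosure C (starOp C P (pow C P n)) A := hA
      clear hA
      induction hA' with
      | of A hA =>
          obtain ⟨Q, B, i, π, δ, hQ, hB, hT⟩ := hA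
          intro X Z f hf a
          cases hf with
          | comp f₁ f₂ hg hpow =>
            have h1 : i ≫ a ≫ f₁ = 0 := by
              have h := hg Q hQ 0 ((shiftFunctorZero C ℤ).hom.app Q ≫ i ≫ a)
              have h' := congrArg (fun t => (shiftFunctorZero C ℤ).inv.app Q ≫ t) h
              simpa using h'
            obtain ⟨h, hh⟩ := Triangle.yoneda_exact₂ _ hT (a ≫ f₁) h1
            change B ⟶ _ at h
            change a ≫ f₁ = π ≫ h at hh
            have h2 : h ≫ f₂ = 0 := ih B hB _ _ f₂ hpow h
            rw [← Category.assoc, hh, Category.assoc, h2, comp_zero]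
      | zero A hA =>
          intro X Z f hf a
          rw [hA.eq_zero_of_src a, zero_comp]
      | shift A k hA ihA =>
          intro X Z f hf a
          apply (shiftFunctor C (-k)).map_injective
          rw [Functor.map_comp, Functor.map_zero]
          have h0 := ihA _ _ (f⟦-k⟧') (hf.shift (-k))
            ((shiftFunctorCompIsoId C k (-k) (add_neg_cancel k)).inv.app A ≫ a⟦-k⟧')
          rw [Category.assoc] at h0
          have h1 := congrArg
            (fun t => (shiftFunctorCompIsoId C k (-k) (add_neg_cancel k)).hom.app A ≫ t) h0
          simpa using h1
      | sum A B hA hB ihA ihB =>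
          intro X Z f hf a
          apply biprod.hom_ext' <;> rw [comp_zero, ← Category.assoc]
          · exact ihA _ _ f hf _
          · exact ihB _ _ f hf _
      | retract A B i p hip hB ihB =>
          intro X Z f hf a
          have h0 := ihB _ _ f hf (p ≫ a)
          rw [show a = i ≫ p ≫ a by rw [← Category.assoc, hip, Category.id_comp],
            Category.assoc, h0, comp_zero]

lemma annihilated_of_addClosure {R : Type*} [CommRing R] [Linear R C]
    [∀ k : ℤ, Functor.Linear R (shiftFunctor C k)] (r : R) (n : ℕ) {X : C}
    (hX : AddClosure C (starOp C (pow C P n) (Tkill C R r)) X) :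
    ∀ (Y : C) (f : X ⟶ Y), GhostPow C P n f → r • f = 0 := by
  induction hX with
  | of X hX =>
      obtain ⟨A, B, i, π, δ, hA, hB, hT⟩ := hX
      intro Y f hf
      have h1 : i ≫ f = 0 := pow_ghost_vanish n A hA _ _ f hf i
      obtain ⟨h, hh⟩ := Triangle.yoneda_exact₂ _ hT f h1
      change B ⟶ Y at h
      change f = π ≫ h at hh
      have hB' : r • (𝟙 B) = 0 := hB
      have hrh : r • h = 0 := by
        rw [← Category.id_comp h, ← Linear.smul_comp, hB', zero_comp]
      rw [hh, ← Linear.comp_smul, hrh, comp_zero]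
  | zero X hX =>
      intro Y f hf
      rw [hX.eq_zero_of_src f, smul_zero]
  | shift X k hX ihX =>
      intro Y f hf
      have hf' : GhostPow C P n
          ((shiftFunctorCompIsoId C k (-k) (add_neg_cancel k)).inv.app X ≫ f⟦-k⟧') :=
        GhostPow.precomp _ (hf.shift (-k))
      have h0 := ihX _ _ hf'
      have h1 : r • (f⟦-k⟧') = 0 := by
        have h2 := congrArg
          (fun t => (shiftFunctorCompIsoId C k (-k) (add_neg_cancel k)).hom.app X ≫ t) h0
        simpa using h2
      have h2 : r • (f⟦-k⟧'⟦k⟧') = 0 := by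
        rw [← Functor.map_smul, h1, Functor.map_zero]
      rw [shift_neg_shift'] at h2
      have h3 := congrArg (fun t =>
        (shiftFunctorCompIsoId C (-k) k (neg_add_cancel k)).inv.app (X⟦k⟧) ≫ t ≫
        (shiftFunctorCompIsoId C (-k) k (neg_add_cancel k)).hom.app Y) h2
      simpa using h3
  | sum X X' hX hX' ihX ihX' =>
      intro Y f hf
      apply biprod.hom_ext' <;> rw [comp_zero, Linear.comp_smul]
      · exact ihX _ _ (GhostPow.precomp _ hf)
      · exact ihX' _ _ (GhostPow.precomp _ hf)
  | retract X X' i p hip hX' ihX' =>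
      intro Y f hf
      have h0 := ihX' _ _ (GhostPow.precomp p hf)
      rw [show f = i ≫ p ≫ f by rw [← Category.assoc, hip, Category.id_comp],
        ← Linear.comp_smul, h0, comp_zero]

end Aux

/-- if `D^b(A) = P_n ⋄ T_r`, then `r` annihilates every `n`-fold composite of
ghost morphisms between bounded complexes. -/
theorem ghosts_annihilated_of_decomposition
    (R : Type*) [CommRing R] (A : Type u) [Category.{v} A] [Abelian A] [EnoughProjectives A]
    [HasDerivedCategory A] [Linear R (DerivedCategory A)]
    [∀ k : ℤ, Functor.Linear R (shiftFunctor (DerivedCategory A) k)]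
    (r : R) (n : ℕ)
    (H : ∀ X : DerivedCategory A, Bdd A X →
      AddClosure (DerivedCategory A)
        (starOp (DerivedCategory A) (pow (DerivedCategory A) (ProjCls A) n)
          (Tkill (DerivedCategory A) R r)) X) :
    ∀ (X Y : DerivedCategory A), Bdd A X → Bdd A Y → ∀ f : X ⟶ Y,
      GhostPow (DerivedCategory A) (ProjCls A) n f → r • f = 0 := by
  intro X Y hX _ f hf
  exact annihilated_of_addClosure r n (H X hX) Y f hf
end

section
/- Let A be an R-linear abelian category with enough projectives and r ∈ R, n ≥ 0. If r annihilates every n-fold composite of ghost morphisms in D^b(A), then r·Ext^n_A(M, N) = 0 for all objects M, N of A. -/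
open CategoryTheory Limits Pretriangulated

universe v u

variable (C : Type u) [Category.{v} C] [Preadditive C] [HasZeroObject C]
  [HasShift C ℤ] [∀ n : ℤ, (shiftFunctor C n).Additive] [Pretriangulated C]

variable [HasBinaryBiproducts C]

/-! ### Auxiliary lemmas -/

section GhostLemmas

variable {C}

lemma MyAux.isGhost_precomp {P : Set C} {X Y Z : C} (e : X ⟶ Y) {f : Y ⟶ Z}
    (hf : IsGhost C P f) : IsGhost C P (e ≫ f) := fun Q hQ k g => by
  rw [← Category.assoc]; exact hf Q hQ k (g ≫ e)

lemma MyAux.isGhost_shift {P : Set C} {X Y : C} {f : X ⟶ Y} (hf : IsGhost C P f) (m : ℤ) :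
    IsGhost C P ((shiftFunctor C m).map f) := by
  intro Q hQ k g
  obtain ⟨h, hh⟩ := (shiftFunctor C m).map_surjective
    (((shiftFunctorAdd' C (k - m) m k (by ring)).app Q).inv ≫ g)
  have hg : g = ((shiftFunctorAdd' C (k - m) m k (by ring)).app Q).hom ≫
      (shiftFunctor C m).map h := by rw [hh]; simp
  rw [hg, Category.assoc, ← Functor.map_comp, hf Q hQ (k - m) h, Functor.map_zero, comp_zero]

lemma MyAux.ghostPow_postcomp {P : Set C} {n : ℕ} {X Y : C} {g : X ⟶ Y}
    (hg : GhostPow C P n g) : ∀ {Z : C} (e : Y ⟶ Z), GhostPow C P n (g ≫ e) := by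
  induction hg with
  | zero f => exact fun e => GhostPow.zero _
  | comp f g hf _ ih =>
      intro Z e
      rw [Category.assoc]
      exact GhostPow.comp _ _ hf (ih e)

lemma MyAux.ghostPow_shift {P : Set C} {n : ℕ} {X Y : C} {g : X ⟶ Y}
    (hg : GhostPow C P n g) (m : ℤ) : GhostPow C P n ((shiftFunctor C m).map g) := by
  induction hg with
  | zero f => exact GhostPow.zero _
  | comp f g hf _ ih =>
      rw [Functor.map_comp]
      exact GhostPow.comp _ _ (MyAux.isGhost_shift hf m) ih

end GhostLemmas

namespace MyAux

open HomologicalComplex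

variable {A : Type u} [Category.{v} A] [Abelian A]

lemma homotopy_vanish (P : A) [Projective P] (a : ℤ) {Z : CochainComplex A ℤ}
    (hZ : ∀ n : ℤ, Z.ExactAt n)
    (u : (single A (ComplexShape.up ℤ) a).obj P ⟶ Z) :
    (HomotopyCategory.quotient A (ComplexShape.up ℤ)).map u = 0 := by
  have hexact : (Z.sc a).Exact := hZ a
  have hv : ((singleObjXSelf (ComplexShape.up ℤ) a P).inv ≫ u.f a) ≫ (Z.sc a).g = 0 := by
    have h := u.comm a ((ComplexShape.up ℤ).next a)
    dsimp [HomologicalComplex.sc, HomologicalComplex.shortComplexFunctor,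
      HomologicalComplex.shortComplexFunctor'] at *
    rw [Category.assoc, h]
    simp
    rfl
  set l : P ⟶ Z.X ((ComplexShape.up ℤ).prev a) :=
    hexact.liftFromProjective _ hv with hldef
  have hld : l ≫ Z.d ((ComplexShape.up ℤ).prev a) a =
      (singleObjXSelf (ComplexShape.up ℤ) a P).inv ≫ u.f a :=
    hexact.liftFromProjective_comp _ hv
  let hom : ∀ i j : ℤ, (((single A (ComplexShape.up ℤ) a).obj P).X i ⟶ Z.X j) := fun i j =>
    if h : i = a ∧ j = (ComplexShape.up ℤ).prev a then
      eqToHom (by rw [h.1]) ≫ (singleObjXSelf (ComplexShape.up ℤ) a P).hom ≫ l ≫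
        eqToHom (by rw [h.2]) else 0
  have H : Homotopy u 0 := by
    refine { hom := hom, zero := ?_, comm := ?_ }
    · intro i j hij
      dsimp only [hom]
      rw [dif_neg]
      rintro ⟨rfl, rfl⟩
      exact hij (by simp)
    · intro i
      by_cases hi : i = a
      · subst hi
        rw [dNext_eq hom (show (ComplexShape.up ℤ).Rel i (i+1) by simp),
          single_obj_d, zero_comp]
        have h2 : prevD i hom = u.f i := by
          dsimp [prevD, hom]
          rw [AddMonoidHom.mk'_apply]; dsimp only; rw [dif_pos ⟨rfl, rfl⟩]
          simp only [eqToHom_refl, Category.comp_id, Category.id_comp, Category.assoc]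
          rw [hld]
          simp
        rw [h2]
        simp
      · exact (isZero_single_obj_X (ComplexShape.up ℤ) a P i hi).eq_of_src _ _
  rw [HomotopyCategory.eq_of_homotopy _ _ H, Functor.map_zero]

lemma orthK (P : A) [Projective P] (a : ℤ)
    (Z : HomotopyCategory A (ComplexShape.up ℤ))
    (hZ : HomotopyCategory.subcategoryAcyclic A Z)
    (u : (HomotopyCategory.singleFunctor A a).obj P ⟶ Z) : u = 0 := by
  obtain ⟨Zc⟩ := Z
  obtain ⟨u', rfl⟩ := (HomotopyCategory.quotient A (ComplexShape.up ℤ)).map_surjective u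
  exact homotopy_vanish P a
    ((HomotopyCategory.quotient_obj_mem_subcategoryAcyclic_iff_exactAt Zc).1 hZ) u'

variable [HasDerivedCategory A]

lemma surjQh (X Y : HomotopyCategory A (ComplexShape.up ℤ))
    (hX : ∀ Z, HomotopyCategory.subcategoryAcyclic A Z → ∀ u : X ⟶ Z, u = 0)
    (φ : DerivedCategory.Qh.obj X ⟶ DerivedCategory.Qh.obj Y) :
    ∃ g : X ⟶ Y, φ = DerivedCategory.Qh.map g := by
  obtain ⟨α, hα⟩ := Localization.exists_leftFraction DerivedCategory.Qh
    (HomotopyCategory.subcategoryAcyclic A).trW φ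
  obtain ⟨Z, g', h', hT, hZ⟩ := α.hs
  obtain ⟨w, hw⟩ := Triangle.coyoneda_exact₂ _ hT α.f (hX Z hZ _)
  have : IsIso (DerivedCategory.Qh.map α.s) :=
    Localization.inverts DerivedCategory.Qh (HomotopyCategory.subcategoryAcyclic A).trW _ α.hs
  refine ⟨w, ?_⟩
  rw [hα]
  dsimp [MorphismProperty.LeftFraction.map]
  erw [hw, Functor.map_comp, Category.assoc]
  erw [IsIso.hom_inv_id, Category.comp_id]
  rfl

lemma surjD (P : A) [Projective P] (a : ℤ) (Y : HomotopyCategory A (ComplexShape.up ℤ))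
    (φ : (DerivedCategory.singleFunctor A a).obj P ⟶ DerivedCategory.Qh.obj Y) :
    ∃ g : (HomotopyCategory.singleFunctor A a).obj P ⟶ Y,
      φ = DerivedCategory.Qh.map g :=
  surjQh _ Y (fun Z hZ u => orthK P a Z hZ u) φ

lemma vanishD (P M : A) [Projective P] (a b : ℤ) (hab : a ≠ b)
    (φ : (DerivedCategory.singleFunctor A a).obj P ⟶ (DerivedCategory.singleFunctor A b).obj M) :
    φ = 0 := by
  obtain ⟨g, rfl⟩ := surjD P a ((HomotopyCategory.singleFunctor A b).obj M) φ
  obtain ⟨g', rfl⟩ := (HomotopyCategory.quotient A (ComplexShape.up ℤ)).map_surjective g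
  have : g' = 0 := by
    ext i
    by_cases hi : i = b
    · subst hi
      exact (isZero_single_obj_X (ComplexShape.up ℤ) a P i (fun h => hab h.symm)).eq_of_src _ _
    · exact (isZero_single_obj_X (ComplexShape.up ℤ) b M i hi).eq_of_tgt _ _
  rw [this, Functor.map_zero]; exact Functor.map_zero _ _ _

lemma fullD (P M : A) [Projective P]
    (φ : (DerivedCategory.singleFunctor A 0).obj P ⟶ (DerivedCategory.singleFunctor A 0).obj M) :
    ∃ g₀ : P ⟶ M, φ = (DerivedCategory.singleFunctor A 0).map g₀ := by
  obtain ⟨g, rfl⟩ := surjD P 0 ((HomotopyCategory.singleFunctor A 0).obj M) φ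
  obtain ⟨g', rfl⟩ := (HomotopyCategory.quotient A (ComplexShape.up ℤ)).map_surjective g
  obtain ⟨g₀, rfl⟩ := (single A (ComplexShape.up ℤ) 0).map_surjective g'
  exact ⟨g₀, rfl⟩

variable (A)

lemma bdd_of_iso {X Y : DerivedCategory A} (e : X ≅ Y) (h : Bdd A Y) : Bdd A X := by
  obtain ⟨a, b, hab⟩ := h
  exact ⟨a, b, fun i hi => (hab i hi).of_iso ((DerivedCategory.homologyFunctor A i).mapIso e)⟩

lemma bdd_single (a : ℤ) (M : A) : Bdd A ((DerivedCategory.singleFunctor A a).obj M) := by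
  refine ⟨a, a, fun i hi => ?_⟩
  have hi' : i ≠ a := by omega
  refine IsZero.of_iso ?_
    (((DerivedCategory.homologyFunctorFactorsh A i).app
      ((HomotopyCategory.singleFunctor A a).obj M)) ≪≫
      ((HomotopyCategory.homologyFunctorFactors A (ComplexShape.up ℤ) i).app
        ((single A (ComplexShape.up ℤ) a).obj M)))
  exact isZero_single_obj_homology (ComplexShape.up ℤ) a M i hi'

/-- The shift of a single object is a single object in another degree. -/
noncomputable def shiftSingleIso (m : ℤ) (M : A) :
    ((DerivedCategory.singleFunctor A 0).obj M)⟦m⟧ ≅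
      (DerivedCategory.singleFunctor A (-m)).obj M :=
  ((DerivedCategory.singleFunctors A).shiftIso m (-m) 0 (by ring)).app M

variable [EnoughProjectives A]

lemma ghostPow_single (n : ℕ) :
    ∀ (M N : A) (f : (DerivedCategory.singleFunctor A 0).obj M ⟶
      ((DerivedCategory.singleFunctor A 0).obj N)⟦(n : ℤ)⟧),
      GhostPow (DerivedCategory A) (ProjCls A) n f := by
  induction n with
  | zero => intro M N f; exact GhostPow.zero f
  | succ n ih =>
    intro M N f
    have hmpos : (0 : ℤ) < ((n + 1 : ℕ) : ℤ) := by positivity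
    set p : Projective.over M ⟶ M := Projective.π M with hp
    let S : ShortComplex A := ShortComplex.mk (kernel.ι p) p (kernel.condition p)
    have hS : S.ShortExact := { exact := S.exact_of_f_is_kernel (kernelIsKernel p) }
    have hT := hS.singleTriangle_distinguished
    let e1 := shiftSingleIso A ((n + 1 : ℕ) : ℤ) N
    -- Step 1 : the composition with `single p` vanishes
    have h1 : (DerivedCategory.singleFunctor A 0).map p ≫ f = 0 := by
      have h0 : ((DerivedCategory.singleFunctor A 0).map p ≫ f) ≫ e1.hom = 0 :=
        vanishD (Projective.over M) N 0 (-((n + 1 : ℕ) : ℤ)) (by omega) _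
      rw [← Category.comp_id ((DerivedCategory.singleFunctor A 0).map p ≫ f),
        ← e1.hom_inv_id, ← Category.assoc, h0, zero_comp]
    -- Step 2 : factor `f` through the boundary map of the triangle
    obtain ⟨w, hw⟩ := Triangle.yoneda_exact₃ _ hT f h1
    -- Step 3 : `w` is a shift of a morphism to which induction applies
    let e2 := ((shiftFunctorAdd' (DerivedCategory A) (n : ℤ) 1 ((n + 1 : ℕ) : ℤ)
      (by push_cast; ring)).app ((DerivedCategory.singleFunctor A 0).obj N)).symm
    obtain ⟨w', hw'⟩ := (shiftFunctor (DerivedCategory A) (1 : ℤ)).map_surjective (w ≫ e2.inv)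
    have hww : w = (shiftFunctor (DerivedCategory A) (1 : ℤ)).map w' ≫ e2.hom := by
      rw [hw']; simp
    have hgw : GhostPow (DerivedCategory A) (ProjCls A) n w := by
      rw [hww]
      exact MyAux.ghostPow_postcomp (MyAux.ghostPow_shift (ih _ _ w') 1) e2.hom
    -- Step 4 : the boundary map is a ghost
    have hδ : IsGhost (DerivedCategory A) (ProjCls A) hS.singleTriangle.mor₃ := by
      intro Q hQ k g
      obtain ⟨P', hP', ⟨e⟩⟩ := hQ
      have key : ∀ (g' : ((DerivedCategory.singleFunctor A 0).obj P')⟦k⟧ ⟶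
          (DerivedCategory.singleFunctor A 0).obj M), g' ≫ hS.singleTriangle.mor₃ = 0 := by
        intro g'
        by_cases hk : k = 0
        · subst hk
          have : Projective P' := hP'
          set e4 := (shiftFunctorZero (DerivedCategory A) ℤ).app
            ((DerivedCategory.singleFunctor A 0).obj P') with he4
          obtain ⟨g₀, hg₀⟩ := fullD P' M (e4.inv ≫ g')
          have hg'' : g' = e4.hom ≫ (DerivedCategory.singleFunctor A 0).map g₀ := by
            rw [← hg₀]; simp
          have hfac : g₀ = Projective.factorThru g₀ p ≫ p :=
            (Projective.factorThru_comp g₀ p).symm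
          have h23 : (DerivedCategory.singleFunctor A 0).map p ≫ hS.singleTriangle.mor₃ = 0 :=
            comp_distTriang_mor_zero₂₃ _ hT
          erw [hg'', Category.assoc, hfac, Functor.map_comp, Category.assoc, h23,
            comp_zero, comp_zero]
        · have : Projective P' := hP'
          let e3 := shiftSingleIso A k P'
          have h0 : e3.inv ≫ g' = 0 := vanishD P' M (-k) 0 (by omega) _
          have : g' = e3.hom ≫ (e3.inv ≫ g') := by simp
          erw [this, h0, comp_zero, zero_comp]
      have hg : g = (shiftFunctor (DerivedCategory A) k).map e.hom ≫
          ((shiftFunctor (DerivedCategory A) k).map e.inv ≫ g) := by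
        rw [← Category.assoc, ← Functor.map_comp, e.hom_inv_id, CategoryTheory.Functor.map_id, Category.id_comp]
      erw [hg, Category.assoc, key _, comp_zero]
    rw [hw]
    exact GhostPow.comp _ _ hδ hgw

end MyAux

/-- if `r` annihilates every `n`-fold composite of ghosts in `D^b(A)`, then
`r • Ext^n_A(M, N) = 0` for all `M, N ∈ A`, where
`Ext^n_A(M, N) = Hom_{D^b(A)}(M, N⟦n⟧)`. -/
theorem ext_annihilated_of_ghosts_annihilated
    (R : Type*) [CommRing R] (A : Type u) [Category.{v} A] [Abelian A] [EnoughProjectives A]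
    [HasDerivedCategory A] [Linear R (DerivedCategory A)]
    [∀ k : ℤ, Functor.Linear R (shiftFunctor (DerivedCategory A) k)]
    (r : R) (n : ℕ)
    (H : ∀ (X Y : DerivedCategory A), Bdd A X → Bdd A Y → ∀ f : X ⟶ Y,
      GhostPow (DerivedCategory A) (ProjCls A) n f → r • f = 0) :
    ∀ (M N : A) (f : (DerivedCategory.singleFunctor A 0).obj M ⟶
        ((DerivedCategory.singleFunctor A 0).obj N)⟦(n : ℤ)⟧),
      r • f = 0 := by
  intro M N f
  exact H _ _ (MyAux.bdd_single A 0 M)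
    (MyAux.bdd_of_iso A (MyAux.shiftSingleIso A (n : ℤ) N) (MyAux.bdd_single A (-(n : ℤ)) N))
    f (MyAux.ghostPow_single A n M N f)
end

section
/- In a triangulated category, if g : X → Y is a morphism and f : P → X satisfies Hom-vanishing g∘f = 0, and X sits in a triangle P →^f X →^q T → ΣP where r·id_T = 0 for a central ring element r, then r·g factors through T; combined with the dual, one obtains: in an R-linear triangulated category, for any full subcategories with T = A * B where r·id = 0 on all objects of A and s·id = 0 on all objects of B, every endomorphism ideal satisfies (rs)·id_X = 0 for all X ∈ T. -/
open CategoryTheory Limits Pretriangulated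

universe v u

variable (C : Type u) [Category.{v} C] [Preadditive C] [HasZeroObject C]
  [HasShift C ℤ] [∀ n : ℤ, (shiftFunctor C n).Additive] [Pretriangulated C]

/-- in an `R`-linear triangulated category, if every object `X` fits into a
distinguished triangle `A ⟶ X ⟶ B ⟶ A⟦1⟧` with `r • 𝟙 A = 0` for all `A ∈ 𝒜` and
`s • 𝟙 B = 0` for all `B ∈ ℬ`, then `(r * s) • 𝟙 X = 0` for every object `X`. -/
theorem kill_of_decomposition (R : Type*) [CommRing R] [Linear R C]
    [∀ n : ℤ, Functor.Linear R (shiftFunctor C n)]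
    (r s : R) (SA SB : Set C)
    (hA : ∀ A ∈ SA, r • (𝟙 A) = 0) (hB : ∀ B ∈ SB, s • (𝟙 B) = 0)
    (H : ∀ X : C, ∃ (A B : C) (f : A ⟶ X) (g : X ⟶ B) (h : B ⟶ A⟦(1 : ℤ)⟧),
      A ∈ SA ∧ B ∈ SB ∧ Triangle.mk f g h ∈ (distTriang C)) :
    ∀ X : C, (r * s) • (𝟙 X) = 0 := by
  intro X
  obtain ⟨A, B, f, g, h, hAmem, hBmem, hT⟩ := H X
  have h1 : (s • (𝟙 X)) ≫ (Triangle.mk f g h).mor₂ = 0 := by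
    change (s • (𝟙 X)) ≫ g = 0
    rw [Linear.smul_comp, Category.id_comp, ← Category.comp_id g, ← Linear.comp_smul,
      hB B hBmem, comp_zero]
  obtain ⟨t, ht⟩ : ∃ t : X ⟶ A, s • 𝟙 X = t ≫ f := Triangle.coyoneda_exact₂ _ hT (s • (𝟙 X)) h1
  change s • 𝟙 X = t ≫ f at ht
  calc (r * s) • 𝟙 X = r • (s • 𝟙 X) := by rw [smul_smul]
    _ = r • (t ≫ f) := by rw [ht]
    _ = t ≫ (r • f) := by rw [Linear.comp_smul]
    _ = t ≫ ((r • 𝟙 A) ≫ f) := by simp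
    _ = 0 := by rw [hA A hAmem, zero_comp, comp_zero]
end
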